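/- If E is not a parent of Y, then S_AS is invariant, i.e., E and Y are d-separated given the union of all minimally invariant sets. -/

import Mathlib

/-- Nodes of the graph: the environment node `E`, predictor nodes `V j` for
`j ∈ {1, …, d}` (represented by `Fin d`), and the response node `Y`. -/
inductive Node (d : ℕ) : Type where
  | E : Node d
  | V : Fin d → Node d
  | Y : Node d
deriving DecidableEq

/-- A directed acyclic graph on `{E} ∪ {1, …, d} ∪ {Y}` in which `E` has no
parents (`E` is exogenous). -/
structure CGraph (d : ℕ) where
  adj : Node d → Node d → Prop
  acyclic : ∀ v, ¬ Relation.TransGen adj v v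
  exogenous : ∀ v, ¬ adj v Node.E

namespace CGraph

variable {d : ℕ} (G : CGraph d)

/-- Undirected adjacency: an edge between `u` and `v` in either direction. -/
def Edge (u v : Node d) : Prop := G.adj u v ∨ G.adj v u

/-- `p` is a path between `a` and `b`: a duplicate-free list of nodes starting
at `a`, ending at `b`, with consecutive nodes adjacent (in either direction). -/
def IsPath (p : List (Node d)) (a b : Node d) : Prop :=
  p.head? = some a ∧ p.getLast? = some b ∧ p.Nodup ∧ p.Chain' G.Edge

/-- `x` is a (strict) descendant of `v`. -/
def Desc (v x : Node d) : Prop := Relation.TransGen G.adj v x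

/-- The consecutive triple `u, m, w` on a path blocks the path given `C`:
either `m` is a non-collider lying in `C`, or `m` is a collider such that
neither `m` nor any of its descendants lies in `C`. -/
def BlockedAt (C : Set (Node d)) (u m w : Node d) : Prop :=
  (¬ (G.adj u m ∧ G.adj w m) ∧ m ∈ C) ∨
  ((G.adj u m ∧ G.adj w m) ∧ m ∉ C ∧ ∀ x, G.Desc m x → x ∉ C)

/-- A path `p` is blocked by `C` if some consecutive triple on it blocks it. -/
def Blocked (C : Set (Node d)) (p : List (Node d)) : Prop :=
  ∃ q u m w r, p = q ++ u :: m :: w :: r ∧ G.BlockedAt C u m w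

/-- `a` and `b` are d-separated given `C`: every path between them is blocked. -/
def DSep (a b : Node d) (C : Set (Node d)) : Prop :=
  ∀ p, G.IsPath p a b → G.Blocked C p

/-- `S ⊆ {1, …, d}` is invariant if `E` and `Y` are d-separated given `S`. -/
def Invariant (S : Set (Fin d)) : Prop := G.DSep Node.E Node.Y (Node.V '' S)

/-- `S` is minimally invariant if it is invariant and no strict subset of `S`
is invariant. -/
def MinInvariant (S : Set (Fin d)) : Prop :=
  G.Invariant S ∧ ∀ S', S' ⊂ S → ¬ G.Invariant S'

/-- `S_AS`: the union of all minimally invariant sets. -/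
def SAS : Set (Fin d) := ⋃₀ {S | G.MinInvariant S}

/-- `S_ICP`: the intersection of all invariant sets (`∅` if there are none). -/
def SICP : Set (Fin d) :=
  {j | (∃ S, G.Invariant S) ∧ ∀ S, G.Invariant S → j ∈ S}

/-- `S_AS^m`: the union of all minimally invariant sets of cardinality `≤ m`. -/
def SASm (m : ℕ) : Set (Fin d) := ⋃₀ {S | G.MinInvariant S ∧ S.ncard ≤ m}

/-- The parents of `Y` among `{1, …, d}`. -/
def paY : Set (Fin d) := {j | G.adj (Node.V j) Node.Y}

/-- The children of `E` among `{1, …, d}`. -/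
def chE : Set (Fin d) := {j | G.adj Node.E (Node.V j)}

/-- The ancestors of `Y` among `{1, …, d}`. -/
def anY : Set (Fin d) := {j | Relation.TransGen G.adj (Node.V j) Node.Y}

/-- `PA(A)`: the union of the parent sets of the elements of `A ⊆ {1, …, d}`. -/
def paOf (A : Set (Fin d)) : Set (Fin d) := {j | ∃ i ∈ A, G.adj (Node.V j) (Node.V i)}

end CGraph

namespace CGraph

variable {d : ℕ} (G : CGraph d)

-- ================= auxiliary development =================

lemma not_adj_self (v : Node d) : ¬ G.adj v v := fun h => G.acyclic v (.single h)

lemma no_two_cycle {u v : Node d} (h1 : G.adj u v) (h2 : G.adj v u) : False :=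
  G.acyclic u (Relation.TransGen.tail (.single h1) h2)

lemma not_desc_E {v : Node d} (h : G.Desc v Node.E) : False := by
  cases h with
  | single h => exact G.exogenous _ h
  | tail _ h => exact G.exogenous _ h

/-- activation of a node given `C`. -/
def Act (C : Set (Node d)) (m : Node d) : Prop := m ∈ C ∨ ∃ x, G.Desc m x ∧ x ∈ C

lemma act_of_desc {C : Set (Node d)} {m y : Node d} (hd : G.Desc m y) (ha : G.Act C y) :
    G.Act C m := by
  rcases ha with hy | ⟨x, hx, hxC⟩
  · exact Or.inr ⟨y, hd, hy⟩
  · exact Or.inr ⟨x, hd.trans hx, hxC⟩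

lemma act_mono {C C' : Set (Node d)} (h : C ⊆ C') {m : Node d} (ha : G.Act C m) :
    G.Act C' m := by
  rcases ha with hy | ⟨x, hx, hxC⟩
  · exact Or.inl (h hy)
  · exact Or.inr ⟨x, hx, h hxC⟩

lemma not_blockedAt_iff {C : Set (Node d)} {u m w : Node d} :
    ¬ G.BlockedAt C u m w ↔
      ((G.adj u m ∧ G.adj w m → G.Act C m) ∧ (¬ (G.adj u m ∧ G.adj w m) → m ∉ C)) := by
  unfold BlockedAt Act
  by_cases hc : G.adj u m ∧ G.adj w m <;> by_cases hm : m ∈ C <;>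
    simp [hc, hm] <;> tauto

/-- index-based formulation of unblockedness -/
def AW (C : Set (Node d)) (p : List (Node d)) : Prop :=
  ∀ i, (hi : i + 2 < p.length) → ¬ G.BlockedAt C (p[i]'(by omega)) (p[i+1]'(by omega)) (p[i+2]'hi)

lemma decomp_of_getElem {α : Type*} (p : List α) (i : ℕ) (h : i + 2 < p.length) :
    ∃ q r, p = q ++ (p[i]'(by omega)) :: (p[i+1]'(by omega)) :: (p[i+2]'h) :: r ∧
      q.length = i := by
  refine ⟨p.take i, p.drop (i+3), ?_, by rw [List.length_take]; omega⟩
  conv_lhs => rw [← List.take_append_drop i p]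
  congr 1
  rw [← List.cons_getElem_drop_succ (h := by omega)]
  congr 1
  rw [← List.cons_getElem_drop_succ (h := by omega)]
  congr 1
  rw [← List.cons_getElem_drop_succ (h := h)]

lemma getElem_of_decomp {α : Type*} {p q r : List α} {u m w : α}
    (hp : p = q ++ u :: m :: w :: r) :
    ∃ h : q.length + 2 < p.length,
      (p[q.length]'(by omega)) = u ∧ (p[q.length+1]'(by omega)) = m ∧
      (p[q.length+2]'h) = w := by
  subst hp
  have h : q.length + 2 < (q ++ u :: m :: w :: r).length := by simp
  refine ⟨h, ?_, ?_, ?_⟩ <;>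
    rw [List.getElem_append_right (by omega)] <;> simp

lemma blocked_iff {C : Set (Node d)} {p : List (Node d)} :
    G.Blocked C p ↔ ∃ i, ∃ h : i + 2 < p.length,
      G.BlockedAt C (p[i]'(by omega)) (p[i+1]'(by omega)) (p[i+2]'h) := by
  constructor
  · rintro ⟨q, u, m, w, r, hp, hB⟩
    obtain ⟨h, h1, h2, h3⟩ := getElem_of_decomp hp
    exact ⟨q.length, h, by rw [h1, h2, h3]; exact hB⟩
  · rintro ⟨i, h, hB⟩
    obtain ⟨q, r, hp, -⟩ := decomp_of_getElem p i h
    exact ⟨q, _, _, _, r, hp, hB⟩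

lemma not_blocked_iff {C : Set (Node d)} {p : List (Node d)} :
    ¬ G.Blocked C p ↔ G.AW C p := by
  rw [blocked_iff]
  push_neg
  rfl

lemma chain'_getElem {α : Type*} {R : α → α → Prop} {p : List α} (hc : p.Chain' R)
    {i : ℕ} (h : i + 1 < p.length) : R (p[i]'(by omega)) (p[i+1]'h) := by
  have := List.isChain_iff_getElem.mp hc i h
  simpa using this


lemma getElem_congr' {α : Type*} {l : List α} {i j : ℕ} (h : i = j) (hi : i < l.length) :
    l[i]'hi = l[j]'(h ▸ hi) := by subst h; rfl

lemma flow {p : List (Node d)} (hc : p.Chain' G.Edge) :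
    ∀ n t, p.length ≤ t + 1 + n → ∀ ht : t + 1 < p.length,
      G.adj (p[t]'(by omega)) (p[t+1]'ht) →
      G.Desc (p[t]'(by omega)) (p[p.length - 1]'(by omega)) ∨
      ∃ s, ∃ hs : s + 1 < p.length, t < s ∧
        G.adj (p[s-1]'(by omega)) (p[s]'(by omega)) ∧ G.adj (p[s+1]'hs) (p[s]'(by omega)) ∧
        G.Desc (p[t]'(by omega)) (p[s]'(by omega)) := by
  intro n
  induction n with
  | zero => intro t hle ht _; omega
  | succ n ih =>
    intro t hle ht hadj
    by_cases h2 : t + 2 < p.length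
    · rcases chain'_getElem hc (i := t+1) h2 with he | he
      · rcases ih (t+1) (by omega) h2 he with hY | ⟨s, hs, hts, ha1, ha2, hdesc⟩
        · exact Or.inl (Relation.TransGen.head hadj hY)
        · exact Or.inr ⟨s, hs, by omega, ha1, ha2, Relation.TransGen.head hadj hdesc⟩
      · exact Or.inr ⟨t+1, h2, by omega, hadj, he, Relation.TransGen.single hadj⟩
    · left
      have h3 : p[p.length-1]'(by omega) = p[t+1]'ht := getElem_congr' (by omega) _
      rw [h3]
      exact Relation.TransGen.single hadj

lemma flowRev {p : List (Node d)} (hc : p.Chain' G.Edge) :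
    ∀ t, ∀ ht : t + 1 < p.length,
      G.adj (p[t+1]'ht) (p[t]'(by omega)) →
      G.Desc (p[t+1]'ht) (p[0]'(by omega)) ∨
      ∃ s, ∃ hs : s + 1 < p.length, 1 ≤ s ∧ s < t + 1 ∧
        G.adj (p[s-1]'(by omega)) (p[s]'(by omega)) ∧ G.adj (p[s+1]'hs) (p[s]'(by omega)) ∧
        G.Desc (p[t+1]'ht) (p[s]'(by omega)) := by
  intro t
  induction t with
  | zero => intro ht hadj; exact Or.inl (Relation.TransGen.single hadj)
  | succ t ih =>
    intro ht hadj
    rcases chain'_getElem hc (i := t) (by omega) with he | he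
    · exact Or.inr ⟨t+1, ht, by omega, by omega, he, hadj, Relation.TransGen.single hadj⟩
    · rcases ih (by omega) he with hY | ⟨s, hs, hs1, hst, ha1, ha2, hdesc⟩
      · exact Or.inl (Relation.TransGen.head hadj hY)
      · exact Or.inr ⟨s, hs, hs1, by omega, ha1, ha2, Relation.TransGen.head hadj hdesc⟩

lemma flowcon {C : Set (Node d)} {p : List (Node d)} (hc : p.Chain' G.Edge) (hA : G.AW C p)
    {j : ℕ} (hj : j + 1 < p.length) (hact : ¬ G.Act C (p[j]'(by omega))) :
    ∀ n t (hn : j ≤ t + 1 + n) (htj : t + 1 ≤ j),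
      G.adj (p[t]'(by omega)) (p[t+1]'(by omega)) →
      G.Desc (p[j]'(by omega)) (p[t+1]'(by omega)) → False := by
  intro n
  induction n with
  | zero =>
    intro t _ ht hadj hdesc
    have hj' : t + 1 = j := by omega
    rw [getElem_congr' hj' (by omega)] at hdesc
    exact G.acyclic _ hdesc
  | succ n ih =>
    intro t hle ht hadj hdesc
    by_cases hej : t + 1 = j
    · rw [getElem_congr' hej (by omega)] at hdesc
      exact G.acyclic _ hdesc
    · have h2 : t + 2 < p.length := by omega
      have hnb := (G.not_blockedAt_iff).mp (hA t h2)
      by_cases hcol : G.adj (p[t]'(by omega)) (p[t+1]'(by omega)) ∧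
          G.adj (p[t+2]'h2) (p[t+1]'(by omega))
      · exact hact (G.act_of_desc hdesc (hnb.1 hcol))
      · have hfwd : G.adj (p[t+1]'(by omega)) (p[t+2]'h2) := by
          rcases chain'_getElem hc (i := t+1) h2 with he | he
          · exact he
          · exact absurd ⟨hadj, he⟩ hcol
        exact ih (t+1) (by omega) (by omega) hfwd (hdesc.tail hfwd)


lemma getElem_eq_of_eq {α : Type*} {l : List α} {i j : ℕ} (h : i = j) {hi : i < l.length} :
    l[i]'hi = l[j]'(h ▸ hi) := by subst h; rfl

lemma walk_to_path {C : Set (Node d)} {a b : Node d} :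
    ∀ n (p : List (Node d)), p.length ≤ n → p.Chain' G.Edge → p.head? = some a →
      p.getLast? = some b → G.AW C p →
      ∃ q, G.IsPath q a b ∧ G.AW C q := by
  intro n
  induction n with
  | zero =>
    intro p hl _ hh _ _
    have hp0 : p = [] := List.length_eq_zero_iff.mp (by omega)
    rw [hp0] at hh
    simp at hh
  | succ n ih =>
    intro p hl hc hh hlast hA
    by_cases hnd : p.Nodup
    · exact ⟨p, ⟨hh, hlast, hnd, hc⟩, hA⟩
    have hnd' := hnd
    rw [List.Nodup, List.pairwise_iff_getElem] at hnd'
    push_neg at hnd'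
    obtain ⟨i, j, hi, hj, hij, heq⟩ := hnd'
    have hple : 0 < p.length := by omega
    set p' := p.take (i+1) ++ p.drop (j+1) with hp'def
    have hlen' : p'.length = i + 1 + (p.length - (j+1)) := by
      simp only [hp'def, List.length_append, List.length_take, List.length_drop]
      omega
    have htk : (p.take (i+1)).length = i + 1 := by rw [List.length_take]; omega
    have hget1 : ∀ k, k ≤ i → ∀ hk : k < p'.length, p'[k]'hk = p[k]'(by omega) := by
      intro k hk hk'
      simp only [hp'def]
      rw [List.getElem_append_left (by omega)]
      rw [List.getElem_take]
    have hget2 : ∀ k, i ≤ k → ∀ hk : k < p'.length, p'[k]'hk = p[k + (j-i)]'(by omega) := by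
      intro k hk hk'
      rcases Nat.eq_or_lt_of_le hk with heq2 | hlt
      · rw [hget1 k heq2.ge, getElem_eq_of_eq heq2.symm, heq]
        exact getElem_eq_of_eq (by omega)
      · simp only [hp'def]
        rw [List.getElem_append_right (by omega)]
        rw [List.getElem_drop]
        exact getElem_eq_of_eq (by omega)
    have ha0 : p[0]'hple = a := by
      rw [List.head?_eq_getElem?, List.getElem?_eq_getElem hple] at hh
      exact Option.some_injective _ hh
    have hbl : p[p.length-1]'(by omega) = b := by
      rw [List.getLast?_eq_getElem?, List.getElem?_eq_getElem (by omega)] at hlast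
      exact Option.some_injective _ hlast
    have h0' : 0 < p'.length := by omega
    refine ih p' (by omega) ?_ ?_ ?_ ?_
    · -- chain'
      refine List.isChain_iff_getElem.mpr ?_
      intro k hk
      rcases le_or_gt (k+1) i with hle | hlt
      · rw [hget1 k (by omega), hget1 (k+1) hle]
        exact chain'_getElem hc (by omega)
      · rw [hget2 k (by omega), hget2 (k+1) (by omega)]
        rw [getElem_eq_of_eq (show k+1+(j-i) = k+(j-i)+1 by omega)]
        exact chain'_getElem hc (by omega)
    · -- head?
      rw [List.head?_eq_getElem?, List.getElem?_eq_getElem h0']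
      refine congrArg some ?_
      rw [hget1 0 (by omega)]
      exact ha0
    · -- getLast?
      rw [List.getLast?_eq_getElem?, List.getElem?_eq_getElem (by omega)]
      refine congrArg some ?_
      rw [hget2 (p'.length-1) (by omega)]
      rw [getElem_eq_of_eq (show p'.length-1+(j-i) = p.length-1 by omega)]
      exact hbl
    · -- AW
      intro k hk2
      rcases le_or_gt (k+2) i with hle | hgt
      · rw [hget1 k (by omega), hget1 (k+1) (by omega), hget1 (k+2) hle]
        exact hA k (by omega)
      rcases le_or_gt i k with hik | hki
      · rw [hget2 k hik, hget2 (k+1) (by omega), hget2 (k+2) (by omega)]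
        rw [getElem_eq_of_eq (show k+1+(j-i) = k+(j-i)+1 by omega),
            getElem_eq_of_eq (show k+2+(j-i) = k+(j-i)+2 by omega)]
        exact hA (k+(j-i)) (by omega)
      · -- junction: k + 1 = i
        have hki' : i = k + 1 := by omega
        subst hki'
        obtain ⟨j', rfl⟩ : ∃ j', j = j' + 1 := ⟨j-1, by omega⟩
        have hj2 : j' + 2 < p.length := by omega
        rw [hget1 k (by omega), hget2 (k+1) (by omega), hget2 (k+2) (by omega)]
        rw [getElem_eq_of_eq (show k+1+(j'+1-(k+1)) = j'+1 by omega),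
            getElem_eq_of_eq (show k+2+(j'+1-(k+1)) = j'+2 by omega)]
        -- goal: ¬ BlockedAt C p[k] p[j'+1] p[j'+2]
        have hT1 := (G.not_blockedAt_iff).mp (hA k (by omega))
        have hT2 := (G.not_blockedAt_iff).mp (hA j' (by omega))
        rw [G.not_blockedAt_iff]
        constructor
        · rintro ⟨ha1, ha2⟩
          by_contra hact
          by_cases hcol1 : G.adj (p[k]'(by omega)) (p[k+1]'(by omega)) ∧
              G.adj (p[k+2]'(by omega)) (p[k+1]'(by omega))
          · exact hact (heq ▸ hT1.1 hcol1)
          · have hak : G.adj (p[k]'(by omega)) (p[k+1]'(by omega)) := by rw [heq]; exact ha1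
            have hfwd : G.adj (p[k+1]'(by omega)) (p[k+2]'(by omega)) := by
              rcases chain'_getElem hc (i := k+1) (by omega) with he | he
              · exact he
              · exact absurd ⟨hak, he⟩ hcol1
            exact G.flowcon hc hA (j := j'+1) (by omega) hact (j'+1) (k+1) (by omega)
              (by omega) hfwd (heq ▸ Relation.TransGen.single hfwd)
        · intro hncol hmC
          have hcol1 : G.adj (p[k]'(by omega)) (p[k+1]'(by omega)) ∧
              G.adj (p[k+2]'(by omega)) (p[k+1]'(by omega)) := by
            by_contra hc1
            exact (hT1.2 hc1) (heq ▸ hmC)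
          have hcol2 : G.adj (p[j']'(by omega)) (p[j'+1]'(by omega)) ∧
              G.adj (p[j'+2]'(by omega)) (p[j'+1]'(by omega)) := by
            by_contra hc2
            exact (hT2.2 hc2) hmC
          exact hncol ⟨heq ▸ hcol1.1, hcol2.2⟩


lemma act_anY {S : Set (Fin d)} (hS : S ⊆ G.anY) {m : Node d}
    (ha : G.Act (Node.V '' S) m) : Relation.TransGen G.adj m Node.Y := by
  rcases ha with hm | ⟨x, hx, hxC⟩
  · obtain ⟨i, hiS, rfl⟩ := hm
    exact hS hiS
  · obtain ⟨i, hiS, rfl⟩ := hxC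
    exact hx.trans (hS hiS)

lemma interior_anY {S : Set (Fin d)} (hS : S ⊆ G.anY) {p : List (Node d)}
    (hc : p.Chain' G.Edge) (hh : p.head? = some Node.E) (hlast : p.getLast? = some Node.Y)
    (hnd : p.Nodup) (hA : G.AW (Node.V '' S) p) :
    ∀ t (ht1 : 1 ≤ t) (ht : t + 1 < p.length),
      ∃ i ∈ G.anY, p[t]'(by omega) = Node.V i := by
  intro t ht1 ht
  obtain ⟨t', rfl⟩ : ∃ t', t = t' + 1 := ⟨t-1, by omega⟩
  have hple : 0 < p.length := by omega
  have ha0 : p[0]'hple = Node.E := by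
    rw [List.head?_eq_getElem?, List.getElem?_eq_getElem hple] at hh
    exact Option.some_injective _ hh
  have hbl : p[p.length-1]'(by omega) = Node.Y := by
    rw [List.getLast?_eq_getElem?, List.getElem?_eq_getElem (by omega)] at hlast
    exact Option.some_injective _ hlast
  have hne : p[t'+1]'(by omega) ≠ Node.E := by
    intro hEq
    have h01 := List.pairwise_iff_getElem.mp hnd 0 (t'+1) hple (by omega) (by omega)
    exact h01 (by rw [hEq, ha0])
  have hneY : p[t'+1]'(by omega) ≠ Node.Y := by
    intro hEq
    have h01 := List.pairwise_iff_getElem.mp hnd (t'+1) (p.length-1) (by omega) (by omega)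
      (by omega)
    exact h01 (by rw [hEq, hbl])
  have key : Relation.TransGen G.adj (p[t'+1]'(by omega)) Node.Y := by
    have htrip := (G.not_blockedAt_iff).mp (hA t' (by omega))
    by_cases hcol : G.adj (p[t']'(by omega)) (p[t'+1]'(by omega)) ∧
        G.adj (p[t'+2]'(by omega)) (p[t'+1]'(by omega))
    · exact G.act_anY hS (htrip.1 hcol)
    · rcases not_and_or.mp hcol with hna | hna
      · have hback : G.adj (p[t'+1]'(by omega)) (p[t']'(by omega)) := by
          rcases chain'_getElem hc (i := t') (by omega) with he | he
          · exact absurd he hna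
          · exact he
        rcases G.flowRev hc t' (by omega) hback with hdesc0 | ⟨s, hs, hs1, hst, ha1, ha2, hdesc⟩
        · rw [ha0] at hdesc0
          exact (G.not_desc_E hdesc0).elim
        · obtain ⟨s', rfl⟩ : ∃ s', s = s' + 1 := ⟨s-1, by omega⟩
          have htrip2 := (G.not_blockedAt_iff).mp (hA s' (by omega))
          exact hdesc.trans (G.act_anY hS (htrip2.1 ⟨ha1, ha2⟩))
      · have hfwd : G.adj (p[t'+1]'(by omega)) (p[t'+2]'(by omega)) := by
          rcases chain'_getElem hc (i := t'+1) (by omega) with he | he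
          · exact he
          · exact absurd he hna
        rcases G.flow hc p.length (t'+1) (by omega) (by omega) hfwd with hY |
          ⟨s, hs, hts, ha1, ha2, hdesc⟩
        · rw [hbl] at hY
          exact hY
        · obtain ⟨s', rfl⟩ : ∃ s', s = s' + 1 := ⟨s-1, by omega⟩
          have htrip2 := (G.not_blockedAt_iff).mp (hA s' (by omega))
          exact hdesc.trans (G.act_anY hS (htrip2.1 ⟨ha1, ha2⟩))
  cases hpt : p[t'+1]'(by omega) with
  | E => exact absurd hpt hne
  | V i => exact ⟨i, by rw [hpt] at key; exact key, rfl⟩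
  | Y => exact absurd hpt hneY


/-- moral adjacency -/
def M (u v : Node d) : Prop :=
  G.Edge u v ∨ ∃ i ∈ G.anY, G.adj u (Node.V i) ∧ G.adj v (Node.V i)

lemma desc_walk {a b : Node d} (h : G.Desc a b) :
    ∃ t : List (Node d), (a :: t).getLast? = some b ∧ (a :: t).Chain' G.adj ∧ t ≠ [] ∧
      ∀ x ∈ t, G.Desc a x := by
  induction h with
  | @single b hab =>
    refine ⟨[b], by simp, ?_, by simp, ?_⟩
    · refine List.isChain_cons_cons.mpr ?_
      exact ⟨hab, by simp⟩
    · intro x hx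
      simp at hx
      subst hx
      exact Relation.TransGen.single hab
  | @tail b c hab hbc ih =>
    obtain ⟨t, hlast, hchain, hne, hmem⟩ := ih
    refine ⟨t ++ [c], ?_, ?_, by simp, ?_⟩
    · show ((a :: t) ++ [c]).getLast? = _
      rw [List.getLast?_concat]
    · show ((a :: t) ++ [c]).Chain' G.adj
      refine List.isChain_append.mpr ?_
      refine ⟨hchain, by simp, ?_⟩
      intro x hx y hy
      rw [hlast] at hx
      simp at hx hy
      subst hx; subst hy
      exact hbc
    · intro x hx
      rcases List.mem_append.mp hx with hx | hx
      · exact hmem x hx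
      · simp at hx
        subst hx
        exact hab.tail hbc

lemma toMoral (U : Set (Fin d)) :
    ∀ n (p : List (Node d)), p.length ≤ n → p ≠ [] → p.Chain' G.Edge →
      p.getLast? = some Node.Y →
      (∀ k, (hk : k + 1 < p.length) → p[k]'(by omega) ≠ Node.Y) →
      (∀ q u m w r, p = q ++ u :: m :: w :: r → G.adj u m → G.adj w m →
        ∃ i ∈ G.anY, m = Node.V i) →
      (∀ q u m w r, p = q ++ u :: m :: w :: r → ¬ (G.adj u m ∧ G.adj w m) →
        ∃ i, i ∈ G.anY ∧ i ∉ U ∧ m = Node.V i) →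
      ∃ w : List (Node d), w.Chain' G.M ∧ w.head? = p.head? ∧ w.getLast? = some Node.Y ∧
        (∀ k, (hk : k + 1 < w.length) → w[k]'(by omega) ≠ Node.Y) ∧
        (∀ q u m v r, w = q ++ u :: m :: v :: r → ∃ i, i ∈ G.anY ∧ i ∉ U ∧ m = Node.V i) := by
  intro n
  induction n with
  | zero =>
    intro p hl hne _ _ _ _ _
    cases p
    · exact absurd rfl hne
    · simp at hl
  | succ n ih =>
    intro p hl hne hc hlast hY T1 T2
    rcases p with _ | ⟨a, p1⟩
    · exact absurd rfl hne
    rcases p1 with _ | ⟨b, p2⟩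
    · have ha : a = Node.Y := by simpa using hlast
      subst ha
      refine ⟨[Node.Y], List.isChain_singleton _, rfl, by simp, ?_, ?_⟩
      · intro k hk; simp at hk
      · intro q u m v r hq
        have := congrArg List.length hq; simp at this; omega
    rcases p2 with _ | ⟨c, p3⟩
    · have hb : b = Node.Y := by simpa using hlast
      subst hb
      have hEdge : G.Edge a Node.Y := (List.isChain_cons_cons.mp hc).1
      refine ⟨[a, Node.Y], ?_, rfl, by simp, ?_, ?_⟩
      · refine List.isChain_cons_cons.mpr ?_
        exact ⟨Or.inl hEdge, by simp⟩
      · intro k hk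
        exact hY k hk
      · intro q u m v r hq
        have := congrArg List.length hq; simp at this; omega
    have hc1 := List.isChain_cons_cons.mp hc
    have hc2 := List.isChain_cons_cons.mp hc1.2
    by_cases hcol : G.adj a b ∧ G.adj c b
    · obtain ⟨i, hianY, hbV⟩ := T1 [] a b c p3 rfl hcol.1 hcol.2
      obtain ⟨w', hwc, hwh, hwl, hwY, hwT⟩ := ih (c :: p3) (by simp at hl ⊢; omega) (by simp)
        hc2.2 (by simpa using hlast)
        (fun k hk => by simpa using hY (k+2) (by simp at hk ⊢; omega))
        (fun q u m v r hq h1 h2 => T1 (a :: b :: q) u m v r (by rw [hq]; simp) h1 h2)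
        (fun q u m v r hq hn => T2 (a :: b :: q) u m v r (by rw [hq]; simp) hn)
      have hwne : w' ≠ [] := by intro hx; rw [hx] at hwh; simp at hwh
      refine ⟨a :: w', ?_, rfl, ?_, ?_, ?_⟩
      · refine List.isChain_cons.mpr ?_
        refine ⟨?_, hwc⟩
        intro y hy
        rw [hwh] at hy
        simp at hy
        subst hy
        exact Or.inr ⟨i, hianY, hbV ▸ hcol.1, hbV ▸ hcol.2⟩
      · show ([a] ++ w').getLast? = some Node.Y
        rw [List.getLast?_append, hwl]; rfl
      · intro k hk
        cases k with
        | zero => simpa using hY 0 (by simp)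
        | succ k' =>
          have := hwY k' (by simp at hk ⊢; omega)
          simpa using this
      · intro q u m v r hq
        rcases q with _ | ⟨q0, q'⟩
        · rw [List.nil_append] at hq
          injection hq with h1 h2
          subst h2
          have hmc : m = c := by simpa using hwh
          subst hmc
          have hcY : m ≠ Node.Y := by simpa using hwY 0 (by simp)
          rcases p3 with _ | ⟨p30, p3'⟩
          · exact absurd (by simpa using hlast) hcY
          · refine T2 [a] b m p30 p3' rfl ?_
            rintro ⟨h1, -⟩
            exact G.no_two_cycle hcol.2 h1
        · rw [List.cons_append] at hq
          injection hq with h1 h2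
          exact hwT q' u m v r h2
    · obtain ⟨ib, hibY, hibU, hbV⟩ := T2 [] a b c p3 rfl hcol
      obtain ⟨w', hwc, hwh, hwl, hwY, hwT⟩ := ih (b :: c :: p3) (by simp at hl ⊢; omega)
        (by simp) hc1.2 (by simpa using hlast)
        (fun k hk => by simpa using hY (k+1) (by simp at hk ⊢; omega))
        (fun q u m v r hq h1 h2 => T1 (a :: q) u m v r (by rw [hq]; simp) h1 h2)
        (fun q u m v r hq hn => T2 (a :: q) u m v r (by rw [hq]; simp) hn)
      have hwne : w' ≠ [] := by intro hx; rw [hx] at hwh; simp at hwh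
      refine ⟨a :: w', ?_, rfl, ?_, ?_, ?_⟩
      · refine List.isChain_cons.mpr ?_
        refine ⟨?_, hwc⟩
        intro y hy
        rw [hwh] at hy
        simp at hy
        subst hy
        exact Or.inl hc1.1
      · show ([a] ++ w').getLast? = some Node.Y
        rw [List.getLast?_append, hwl]; rfl
      · intro k hk
        cases k with
        | zero => simpa using hY 0 (by simp)
        | succ k' =>
          have := hwY k' (by simp at hk ⊢; omega)
          simpa using this
      · intro q u m v r hq
        rcases q with _ | ⟨q0, q'⟩
        · rw [List.nil_append] at hq
          injection hq with h1 h2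
          subst h2
          have hmb : m = b := by simpa using hwh
          subst hmb
          exact ⟨ib, hibY, hibU, hbV⟩
        · rw [List.cons_append] at hq
          injection hq with h1 h2
          exact hwT q' u m v r h2


lemma getLast?_cons_ne {α : Type*} (a : α) {l : List α} (h : l ≠ []) :
    (a :: l).getLast? = l.getLast? := by
  rcases l with _ | ⟨b, t⟩
  · exact absurd rfl h
  · exact List.getLast?_cons_cons ..

lemma head?_getElem {α : Type*} {l : List α} {a : α} (h : l.head? = some a) :
    ∃ hl : 0 < l.length, l[0]'hl = a := by
  rcases l with _ | ⟨b, t⟩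
  · simp at h
  · exact ⟨by simp, by simpa using h⟩

lemma AW_cons {C : Set (Node d)} {a : Node d} {w : List (Node d)} (hw : G.AW C w)
    (h0 : ∀ hlen : 2 ≤ w.length,
      ¬ G.BlockedAt C a (w[0]'(by omega)) (w[1]'(by omega))) :
    G.AW C (a :: w) := by
  intro k hk
  cases k with
  | zero =>
    have := h0 (by simp at hk; omega)
    simpa using this
  | succ k' =>
    have := hw k' (by simp at hk; omega)
    simpa using this

lemma AW_of_adjChain {C : Set (Node d)} {l : List (Node d)} (hchain : l.Chain' G.adj)
    (hmem : ∀ x ∈ l, x ∉ C) : G.AW C l := by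
  intro k hk
  rw [not_blockedAt_iff]
  constructor
  · rintro ⟨h1, h2⟩
    exact (G.no_two_cycle (chain'_getElem hchain (by omega)) h2).elim
  · intro _
    exact hmem _ (List.getElem_mem _)

lemma fromMoral (S : Set (Fin d)) :
    ∀ n (m : List (Node d)), m.length ≤ n → m ≠ [] → m.Chain' G.M →
      m.getLast? = some Node.Y →
      (∀ q u x v r, m = q ++ u :: x :: v :: r → ∃ i, i ∈ G.anY ∧ i ∉ S ∧ x = Node.V i) →
      ∀ a, m.head? = some a → (a = Node.E ∨ (∃ i ∈ G.anY, a = Node.V i) ∨ a = Node.Y) →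
      ∃ w : List (Node d), w.Chain' G.Edge ∧ w.head? = some a ∧ w.getLast? = some Node.Y ∧
        G.AW (Node.V '' S) w ∧
        (w.length = 1 ∨ (∃ hw : 1 < w.length, G.adj a (w[1]'hw)) ∨ G.Act (Node.V '' S) a) := by
  intro n
  induction n with
  | zero =>
    intro m hl hne _ _ _ _ _ _
    cases m
    · exact absurd rfl hne
    · simp at hl
  | succ n ih =>
    intro m hl hne hc hlast hint a ha hakind
    by_cases haY : a = Node.Y
    · subst haY
      exact ⟨[Node.Y], List.isChain_singleton _, rfl, by simp, fun k hk => by simp at hk, Or.inl rfl⟩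
    rcases m with _ | ⟨a0, m1⟩
    · exact absurd rfl hne
    have ha0 : a0 = a := by simpa using ha
    subst ha0
    rcases m1 with _ | ⟨y, m2⟩
    · exact absurd (by simpa using hlast) haY
    have hM : G.M a0 y := (List.isChain_cons_cons.mp hc).1
    have hy_fact : (y = Node.Y ∧ m2 = []) ∨ ∃ i, i ∈ G.anY ∧ i ∉ S ∧ y = Node.V i := by
      rcases m2 with _ | ⟨z2, m3⟩
      · exact Or.inl ⟨by simpa using hlast, rfl⟩
      · exact Or.inr (hint [] a0 y z2 m3 rfl)
    have hykind : y = Node.E ∨ (∃ i ∈ G.anY, y = Node.V i) ∨ y = Node.Y := by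
      rcases hy_fact with ⟨h1, -⟩ | ⟨i, hi, _, hyV⟩
      · exact Or.inr (Or.inr h1)
      · exact Or.inr (Or.inl ⟨i, hi, hyV⟩)
    obtain ⟨wy, hwyc, hwyh, hwyl, hwyA, hwyD⟩ := ih (y :: m2) (by simp at hl ⊢; omega)
      (by simp) (List.isChain_cons_cons.mp hc).2 (by simpa using hlast)
      (fun q u x v r hq => hint (a0 :: q) u x v r (by rw [hq]; simp)) y rfl hykind
    obtain ⟨hwy0, hw0⟩ := head?_getElem hwyh
    have hwyne : wy ≠ [] := by intro hx; subst hx; simp at hwyh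
    have hynotC : y ∉ Node.V '' S := by
      rintro ⟨i0, hi0S, hVi⟩
      rcases hy_fact with ⟨h1, -⟩ | ⟨i, hi, hiS, hyV⟩
      · rw [h1] at hVi; cases hVi
      · rw [hyV] at hVi
        injection hVi with hii
        exact hiS (hii ▸ hi0S)
    rcases hM with hEdge | ⟨iz, hizY, haz, hyz⟩
    · by_cases hgood : G.adj a0 y ∨ G.Act (Node.V '' S) a0
      · refine ⟨a0 :: wy, ?_, rfl, ?_, ?_, ?_⟩
        · refine List.isChain_cons.mpr ?_
          refine ⟨?_, hwyc⟩
          intro b hb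
          rw [hwyh] at hb
          simp at hb
          subst hb
          exact hEdge
        · rw [getLast?_cons_ne _ hwyne]
          exact hwyl
        · refine G.AW_cons hwyA ?_
          intro hlen
          rw [not_blockedAt_iff]
          constructor
          · rintro ⟨h1, h2⟩
            rcases hwyD with hlen1 | ⟨hb, hadj⟩ | hact
            · omega
            · exact ((G.no_two_cycle (hw0 ▸ hadj) h2).elim : G.Act _ _)
            · exact hw0 ▸ hact
          · intro _ hmem
            rw [hw0] at hmem
            exact hynotC hmem
        · rcases hgood with hady | hact
          · refine Or.inr (Or.inl ⟨by simpa using hwy0, ?_⟩)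
            show G.adj a0 (wy[0]'hwy0)
            rw [hw0]
            exact hady
          · exact Or.inr (Or.inr hact)
      · push_neg at hgood
        have hya : G.adj y a0 := hEdge.resolve_left hgood.1
        rcases hakind with rfl | ⟨ia, hiaY, rfl⟩ | rfl
        · exact absurd hya (G.exogenous y)
        · obtain ⟨t, htl, htc, htne, htmem⟩ := G.desc_walk (hiaY : G.Desc _ Node.Y)
          have hnotC : ∀ x ∈ Node.V ia :: t, x ∉ Node.V '' S := by
            intro x hx hxC
            rcases List.mem_cons.mp hx with rfl | hxt
            · exact hgood.2 (Or.inl hxC)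
            · exact hgood.2 (Or.inr ⟨x, htmem x hxt, hxC⟩)
          rcases t with _ | ⟨t0, t'⟩
          · exact absurd rfl htne
          refine ⟨Node.V ia :: t0 :: t', ?_, rfl, htl, ?_, ?_⟩
          · exact htc.imp (fun h => Or.inl h : ∀ {a b}, G.adj a b → G.Edge a b)
          · exact G.AW_of_adjChain htc hnotC
          · exact Or.inr (Or.inl ⟨by simp, (List.isChain_cons_cons.mp htc).1⟩)
        · exact absurd rfl haY
    · by_cases hactz : G.Act (Node.V '' S) (Node.V iz)
      · refine ⟨a0 :: Node.V iz :: wy, ?_, rfl, ?_, ?_, ?_⟩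
        · refine List.isChain_cons_cons.mpr ?_
          refine ⟨Or.inl haz, ?_⟩
          refine List.isChain_cons.mpr ?_
          refine ⟨?_, hwyc⟩
          intro b hb
          rw [hwyh] at hb
          simp at hb
          subst hb
          exact Or.inr hyz
        · rw [getLast?_cons_ne _ (by simp), getLast?_cons_ne _ hwyne]
          exact hwyl
        · refine G.AW_cons ?_ ?_
          · refine G.AW_cons hwyA ?_
            intro hlen
            rw [not_blockedAt_iff]
            constructor
            · rintro ⟨h1, h2⟩
              exact ((G.no_two_cycle h1 (hw0 ▸ hyz)).elim : G.Act _ _)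
            · intro _ hmem
              rw [hw0] at hmem
              exact hynotC hmem
          · intro hlen
            rw [not_blockedAt_iff]
            constructor
            · rintro ⟨h1, h2⟩
              exact hactz
            · intro hncol
              exact absurd ⟨haz, by simpa [hw0] using hyz⟩ hncol
        · exact Or.inr (Or.inl ⟨by simp, haz⟩)
      · obtain ⟨t, htl, htc, htne, htmem⟩ := G.desc_walk (hizY : G.Desc (Node.V iz) Node.Y)
        have hnotC : ∀ x ∈ Node.V iz :: t, x ∉ Node.V '' S := by
          intro x hx hxC
          rcases List.mem_cons.mp hx with rfl | hxt
          · exact hactz (Or.inl hxC)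
          · exact hactz (Or.inr ⟨x, htmem x hxt, hxC⟩)
        rcases t with _ | ⟨t0, t'⟩
        · exact absurd rfl htne
        refine ⟨a0 :: Node.V iz :: t0 :: t', ?_, rfl, ?_, ?_, ?_⟩
        · refine List.isChain_cons_cons.mpr ?_
          exact ⟨Or.inl haz, htc.imp (fun h => Or.inl h : ∀ {a b}, G.adj a b → G.Edge a b)⟩
        · rw [getLast?_cons_ne _ (by simp)]
          exact htl
        · refine G.AW_cons (G.AW_of_adjChain htc hnotC) ?_
          intro hlen
          rw [not_blockedAt_iff]
          constructor
          · rintro ⟨h1, h2⟩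
            exact ((G.no_two_cycle (List.isChain_cons_cons.mp htc).1 h2).elim : G.Act _ _)
          · intro _ hmem
            exact hnotC _ (by simp) hmem
        · exact Or.inr (Or.inl ⟨by simp, haz⟩)


lemma moral_of_unblocked {U : Set (Fin d)} (hU : U ⊆ G.anY) {p : List (Node d)}
    (hh : p.head? = some Node.E) (hlast : p.getLast? = some Node.Y) (hnd : p.Nodup)
    (hc : p.Chain' G.Edge) (hA : G.AW (Node.V '' U) p) :
    ∃ w : List (Node d), w.Chain' G.M ∧ w.head? = some Node.E ∧ w.getLast? = some Node.Y ∧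
      (∀ q u m v r, w = q ++ u :: m :: v :: r →
        ∃ i, i ∈ G.anY ∧ i ∉ U ∧ m = Node.V i) := by
  have hpne : p ≠ [] := by intro hx; rw [hx] at hh; simp at hh
  have hInt := G.interior_anY hU hc hh hlast hnd hA
  have hple : 0 < p.length := List.length_pos_iff.mpr hpne
  have hbl : p[p.length-1]'(by omega) = Node.Y := by
    rw [List.getLast?_eq_getElem?, List.getElem?_eq_getElem (by omega)] at hlast
    exact Option.some_injective _ hlast
  have hYcl : ∀ k, (hk : k + 1 < p.length) → p[k]'(by omega) ≠ Node.Y := by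
    intro k hk hEq
    have hpw := List.pairwise_iff_getElem.mp hnd k (p.length-1) (by omega) (by omega) (by omega)
    exact hpw (by rw [hEq, hbl])
  have hT1 : ∀ q u m0 w0 r, p = q ++ u :: m0 :: w0 :: r → G.adj u m0 → G.adj w0 m0 →
      ∃ i ∈ G.anY, m0 = Node.V i := by
    intro q u m0 w0 r hq hadj1 hadj2
    obtain ⟨hlen3, e1, e2, e3⟩ := getElem_of_decomp hq
    obtain ⟨i, hianY, hVi⟩ := hInt (q.length+1) (by omega) (by omega)
    exact ⟨i, hianY, by rw [← e2, hVi]⟩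
  have hT2 : ∀ q u m0 w0 r, p = q ++ u :: m0 :: w0 :: r → ¬ (G.adj u m0 ∧ G.adj w0 m0) →
      ∃ i, i ∈ G.anY ∧ i ∉ U ∧ m0 = Node.V i := by
    intro q u m0 w0 r hq hncol
    obtain ⟨hlen3, e1, e2, e3⟩ := getElem_of_decomp hq
    obtain ⟨i, hianY, hVi⟩ := hInt (q.length+1) (by omega) (by omega)
    have hnb2 := (G.not_blockedAt_iff).mp (hA q.length hlen3)
    have hnotC : (p[q.length+1]'(by omega)) ∉ Node.V '' U := by
      refine hnb2.2 ?_
      rw [e1, e2, e3]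
      exact hncol
    refine ⟨i, hianY, ?_, by rw [← e2, hVi]⟩
    intro hiU
    exact hnotC (by rw [hVi]; exact ⟨i, hiU, rfl⟩)
  obtain ⟨w, hwc, hwh, hwl, hwY, hwT⟩ := G.toMoral U p.length p le_rfl hpne hc hlast hYcl
    hT1 hT2
  exact ⟨w, hwc, by rw [hwh, hh], hwl, hwT⟩

lemma invariant_of_subset {S U : Set (Fin d)} (hU : U ⊆ G.anY) (hSU : S ⊆ U)
    (hSinv : G.Invariant S) : G.Invariant U := by
  intro p hp
  by_contra hnb
  have hA : G.AW (Node.V '' U) p := G.not_blocked_iff.mp hnb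
  obtain ⟨hh, hlast, hnd, hc⟩ := hp
  obtain ⟨w, hwc, hwh, hwl, hwT⟩ := G.moral_of_unblocked hU hh hlast hnd hc hA
  have hwne : w ≠ [] := by intro hx; rw [hx] at hwh; simp at hwh
  obtain ⟨w2, h2c, h2h, h2l, h2A, -⟩ := G.fromMoral S w.length w le_rfl hwne hwc hwl
    (fun q u x v r hq => by
      obtain ⟨i, hianY, hiU, hxV⟩ := hwT q u x v r hq
      exact ⟨i, hianY, fun hiS => hiU (hSU hiS), hxV⟩)
    Node.E hwh (Or.inl rfl)
  obtain ⟨q, hq, hqA⟩ := G.walk_to_path w2.length w2 le_rfl h2c h2h h2l h2A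
  rcases G.blocked_iff.mp (hSinv q hq) with ⟨i, hil, hB⟩
  exact hqA i hil hB

lemma anY_invariant (h : ¬ G.adj Node.E Node.Y) : G.Invariant G.anY := by
  intro p hp
  by_contra hnb
  have hA : G.AW (Node.V '' G.anY) p := G.not_blocked_iff.mp hnb
  obtain ⟨hh, hlast, hnd, hc⟩ := hp
  obtain ⟨w, hwc, hwh, hwl, hwT⟩ :=
    G.moral_of_unblocked (subset_rfl) hh hlast hnd hc hA
  rcases w with _ | ⟨w0, w1⟩
  · simp at hwh
  rcases w1 with _ | ⟨wb, w2⟩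
  · have h1 : w0 = Node.E := by simpa using hwh
    have h2 : w0 = Node.Y := by simpa using hwl
    rw [h1] at h2
    cases h2
  rcases w2 with _ | ⟨wc, w3⟩
  · have h1 : w0 = Node.E := by simpa using hwh
    have h2 : wb = Node.Y := by simpa using hwl
    subst h1; subst h2
    have hM := (List.isChain_cons_cons.mp hwc).1
    rcases hM with hE | ⟨i, hianY, hEz, hYz⟩
    · rcases hE with h1 | h1
      · exact h h1
      · exact G.exogenous _ h1
    · exact G.acyclic Node.Y ((Relation.TransGen.single hYz).trans hianY)
  · obtain ⟨i, hianY, hiU, -⟩ := hwT [] w0 wb wc w3 rfl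
    exact hiU hianY

lemma exists_minInvariant_aux :
    ∀ n {S : Set (Fin d)}, S.ncard = n → G.Invariant S →
      ∃ T, T ⊆ S ∧ G.MinInvariant T := by
  intro n
  induction n using Nat.strong_induction_on with
  | _ n ih =>
    intro S hn hS
    by_cases hmin : ∀ S', S' ⊂ S → ¬ G.Invariant S'
    · exact ⟨S, subset_rfl, hS, hmin⟩
    · push_neg at hmin
      obtain ⟨S', hSS', hS'⟩ := hmin
      obtain ⟨T, hT1, hT2⟩ :=
        ih S'.ncard (by rw [← hn]; exact Set.ncard_lt_ncard hSS' (Set.toFinite S)) rfl hS'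
      exact ⟨T, hT1.trans hSS'.subset, hT2⟩

lemma exists_minInvariant {S : Set (Fin d)} (hS : G.Invariant S) :
    ∃ T, T ⊆ S ∧ G.MinInvariant T :=
  G.exists_minInvariant_aux S.ncard rfl hS

lemma minInvariant_subset_anY {S : Set (Fin d)} (hS : G.MinInvariant S) : S ⊆ G.anY := by
  by_contra hns
  have hsub : S ∩ G.anY ⊂ S := by
    constructor
    · exact Set.inter_subset_left
    · intro hsub2
      exact hns (fun x hx => (hsub2 hx).2)
  refine hS.2 _ hsub ?_
  intro p hp
  by_contra hnb
  have hA := G.not_blocked_iff.mp hnb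
  obtain ⟨hh, hlast, hnd, hc⟩ := hp
  have hInt := G.interior_anY (Set.inter_subset_right) hc hh hlast hnd hA
  have hA2 : G.AW (Node.V '' S) p := by
    intro k hk
    have h1 := (G.not_blockedAt_iff).mp (hA k hk)
    rw [not_blockedAt_iff]
    constructor
    · intro hcol
      exact G.act_mono (Set.image_mono Set.inter_subset_left) (h1.1 hcol)
    · intro hncol hmem
      obtain ⟨i, hianY, hVi⟩ := hInt (k+1) (by omega) (by omega)
      obtain ⟨i0, hi0, hVi0⟩ := hmem
      refine h1.2 hncol ?_
      have hii : i0 = i := by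
        have h3 : Node.V i0 = Node.V i := by rw [hVi0, hVi]
        injection h3
      exact ⟨i0, ⟨hi0, hii ▸ hianY⟩, hVi0⟩
  rcases G.blocked_iff.mp (hS.1 p ⟨hh, hlast, hnd, hc⟩) with ⟨i, hil, hB⟩
  exact hA2 i hil hB

end CGraph


/-- if `E` is not a parent of `Y`, then `S_AS` is invariant,
i.e., `E` and `Y` are d-separated given the union of all minimally invariant
sets. -/
theorem SAS_invariant {d : ℕ} (G : CGraph d) (h : ¬ G.adj Node.E Node.Y) :
    G.Invariant G.SAS := by
  have hanY : G.Invariant G.anY := G.anY_invariant h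
  obtain ⟨T, hTsub, hTmin⟩ := G.exists_minInvariant hanY
  have hTS : T ⊆ G.SAS := fun x hx => ⟨T, hTmin, hx⟩
  have hSASanY : G.SAS ⊆ G.anY := by
    rintro x ⟨S0, hS0, hx⟩
    exact G.minInvariant_subset_anY hS0 hx
  exact G.invariant_of_subset hSASanY hTS hTmin.1
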